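/- Let G be a finitely generated group satisfying a nontrivial group law, B ≤ G a subgroup, and φ: G → B an isomorphism. Then the HNN extension Γ = ⟨G, t | t⁻¹gt = φ(g), g ∈ G⟩ satisfies a nontrivial group law; in particular, if Γ is not cyclic, girth(Γ) < ∞. -/

import Mathlib

/-- A group satisfies a nontrivial group law. -/
def SatisfiesLaw (G : Type*) [Group G] : Prop :=
  ∃ (n : ℕ) (w : FreeGroup (Fin n)), w ≠ 1 ∧ ∀ f : Fin n → G, FreeGroup.lift f w = 1

/- `HasInfiniteGirth G` means: for every `r` there is a finite generating set of
`G` admitting no nontrivial relation of length less than `r`; i.e. `girth G = ∞`. -/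
open scoped Classical in
def HasInfiniteGirth (G : Type*) [Group G] : Prop :=
  ∀ r : ℕ, ∃ S : Finset G, Subgroup.closure (S : Set G) = ⊤ ∧
    ∀ w : FreeGroup {x // x ∈ S}, w ≠ 1 →
      FreeGroup.lift (fun s => (s : G)) w = 1 → r ≤ w.toWord.length

open SemidirectProduct Multiplicative

namespace HNNLaw

/-! ### A free family in the free group on two generators

We show that `v i = a^i [a,b] a^{-i}`, `i < n`, freely generate a free subgroup of
`FreeGroup Bool`, by mapping to the semidirect product `FreeGroup ℤ ⋊ ℤ` (with `ℤ`
acting by shifting generators) and exhibiting a retraction. -/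

def shiftAut (z : ℤ) : MulAut (FreeGroup ℤ) := FreeGroup.freeGroupCongr (Equiv.addRight z)

lemma shiftAut_of (z k : ℤ) : shiftAut z (FreeGroup.of k) = FreeGroup.of (k + z) := rfl

def shift : Multiplicative ℤ →* MulAut (FreeGroup ℤ) :=
  MonoidHom.mk' (fun g => shiftAut (toAdd g)) (by
    intro a b
    apply MulEquiv.toMonoidHom_injective
    apply FreeGroup.ext_hom
    intro k
    show shiftAut _ (FreeGroup.of k) = shiftAut _ (shiftAut _ (FreeGroup.of k))
    simp only [shiftAut_of, toAdd_mul]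
    ring_nf)

lemma shift_of (g : Multiplicative ℤ) (k : ℤ) :
    shift g (FreeGroup.of k) = FreeGroup.of (k + toAdd g) := rfl

abbrev Hsd := SemidirectProduct (FreeGroup ℤ) (Multiplicative ℤ) shift

def θ : FreeGroup Bool →* Hsd :=
  FreeGroup.lift (fun x => if x then inr (ofAdd (1 : ℤ)) else inl (FreeGroup.of (0 : ℤ)))

/-- The free family: `v n i = a^i [a,b] a^{-i}`. -/
def v (n : ℕ) (i : Fin n) : FreeGroup Bool :=
  FreeGroup.of true ^ (i : ℕ) *
    (FreeGroup.of true * FreeGroup.of false * (FreeGroup.of true)⁻¹ * (FreeGroup.of false)⁻¹) *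
    (FreeGroup.of true ^ (i : ℕ))⁻¹

def wgen (n : ℕ) (i : Fin n) : FreeGroup ℤ :=
  FreeGroup.of ((0 : ℤ) + 1 + ((i : ℕ) : ℤ)) * (FreeGroup.of ((0 : ℤ) + ((i : ℕ) : ℤ)))⁻¹

lemma theta_v (n : ℕ) (i : Fin n) : θ (v n i) = inl (wgen n i) := by
  have ht : θ (FreeGroup.of true) = inr (ofAdd (1 : ℤ)) := by simp [θ]
  have hf : θ (FreeGroup.of false) = inl (FreeGroup.of (0 : ℤ)) := by simp [θ]
  have key : ∀ (g : Multiplicative ℤ) (x : FreeGroup ℤ),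
      inr (φ := shift) g * inl x * (inr g)⁻¹ = inl (shift g x) := by
    intro g x; rw [inl_aut, _root_.map_inv]
  calc θ (v n i)
      = (inr (ofAdd (1:ℤ)))^(i:ℕ) *
          (inr (ofAdd (1:ℤ)) * inl (FreeGroup.of (0:ℤ)) * (inr (ofAdd (1:ℤ)))⁻¹ *
            (inl (FreeGroup.of (0:ℤ)))⁻¹) * ((inr (ofAdd (1:ℤ)))^(i:ℕ))⁻¹ := by
        simp only [v, _root_.map_mul, _root_.map_pow, _root_.map_inv, ht, hf]
    _ = inr (ofAdd (1:ℤ) ^ (i:ℕ)) *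
          inl (shift (ofAdd (1:ℤ)) (FreeGroup.of (0:ℤ)) * (FreeGroup.of (0:ℤ))⁻¹) *
          (inr (ofAdd (1:ℤ) ^ (i:ℕ)))⁻¹ := by
        rw [key, ← _root_.map_inv inl, ← _root_.map_mul inl, _root_.map_pow inr]
    _ = inl (shift (ofAdd (1:ℤ) ^ (i:ℕ))
          (shift (ofAdd (1:ℤ)) (FreeGroup.of (0:ℤ)) * (FreeGroup.of (0:ℤ))⁻¹)) := key _ _
    _ = inl (wgen n i) := by
        rw [_root_.map_mul, _root_.map_inv, shift_of, shift_of, shift_of]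
        simp [wgen, toAdd_pow, smul_eq_mul]

/-- partial products of generators: `pprod n m = x_{m-1} ⋯ x_0` (capped at `n`). -/
def pprod (n : ℕ) : ℕ → FreeGroup (Fin n)
  | 0 => 1
  | m + 1 => (if h : m < n then FreeGroup.of (⟨m, h⟩ : Fin n) else 1) * pprod n m

def retr (n : ℕ) : FreeGroup ℤ →* FreeGroup (Fin n) :=
  FreeGroup.lift (fun k => pprod n k.toNat)

lemma retr_wgen (n : ℕ) (i : Fin n) : retr n (wgen n i) = FreeGroup.of i := by
  have h1 : ((1:ℤ) + ((i:ℕ):ℤ)).toNat = (i : ℕ) + 1 := by omega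
  simp only [wgen, _root_.map_mul, _root_.map_inv, retr, FreeGroup.lift_apply_of, zero_add,
    Int.toNat_natCast, h1, pprod, i.isLt, dif_pos]
  simp [mul_assoc]

lemma lift_v_injective (n : ℕ) : Function.Injective (FreeGroup.lift (v n)) := by
  have hcomp : θ.comp (FreeGroup.lift (v n)) =
      (inl (φ := shift)).comp (FreeGroup.lift (wgen n)) := by
    apply FreeGroup.ext_hom
    intro i
    simp [theta_v]
  have hwinj : Function.Injective (FreeGroup.lift (wgen n)) := by
    have h2 : (retr n).comp (FreeGroup.lift (wgen n)) = MonoidHom.id _ := by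
      apply FreeGroup.ext_hom
      intro i
      simp [retr_wgen]
    intro x y hxy
    have h := congrArg (retr n) hxy
    calc x = ((retr n).comp (FreeGroup.lift (wgen n))) x := by rw [h2]; rfl
    _ = ((retr n).comp (FreeGroup.lift (wgen n))) y := h
    _ = y := by rw [h2]; rfl
  have hcompinj : Function.Injective (⇑θ ∘ ⇑(FreeGroup.lift (v n))) := by
    have heq : ⇑θ ∘ ⇑(FreeGroup.lift (v n)) = ⇑inl ∘ ⇑(FreeGroup.lift (wgen n)) := by
      funext x
      exact DFunLike.congr_fun hcomp x
    rw [heq]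
    exact inl_injective.comp hwinj
  exact Function.Injective.of_comp hcompinj

/-! ### Structure of the semi-proper HNN extension -/

variable {G : Type*} [Group G] (B : Subgroup G) (φ : (⊤ : Subgroup G) ≃* B)

local notation "Γ" => HNNExtension G ⊤ B φ

/-- The endomorphism `g ↦ φ g` of `G`. -/
def ρ : G →* G :=
  B.subtype.comp (φ.toMonoidHom.comp (Subgroup.topEquiv (G := G)).symm.toMonoidHom)

lemma t_mul_of' (g : G) :
    (HNNExtension.t : Γ) * HNNExtension.of g = HNNExtension.of (ρ B φ g) * HNNExtension.t := by
  have h := HNNExtension.t_mul_of (φ := φ) (a := (⟨g, trivial⟩ : (⊤ : Subgroup G)))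
  exact h

lemma pow_t_mul_of (m : ℕ) (g : G) :
    (HNNExtension.t : Γ) ^ m * HNNExtension.of g =
      HNNExtension.of ((ρ B φ)^[m] g) * HNNExtension.t ^ m := by
  induction m with
  | zero => simp
  | succ m ih =>
      rw [pow_succ', mul_assoc, ih, ← mul_assoc, t_mul_of', Function.iterate_succ_apply',
        mul_assoc, ← pow_succ']

lemma of_eq_conj (m : ℕ) (g : G) :
    (HNNExtension.of ((ρ B φ)^[m] g) : Γ) =
      HNNExtension.t ^ m * HNNExtension.of g * (HNNExtension.t ^ m)⁻¹ := by
  rw [pow_t_mul_of]; group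

/-- Normal form: every element of the HNN extension is `t^{-m} g t^k`. -/
lemma normal_form (x : Γ) :
    ∃ (m k : ℕ) (g : G),
      x = ((HNNExtension.t : Γ) ^ m)⁻¹ * HNNExtension.of g * HNNExtension.t ^ k := by
  induction x using HNNExtension.induction_on with
  | of g => exact ⟨0, 0, g, by simp⟩
  | t => exact ⟨0, 1, 1, by simp⟩
  | inv x hx =>
      obtain ⟨m, k, g, rfl⟩ := hx
      exact ⟨k, m, g⁻¹, by rw [_root_.map_inv]; group⟩
  | mul x y hx hy =>
      obtain ⟨m, k, g, rfl⟩ := hx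
      obtain ⟨p, q, h, rfl⟩ := hy
      rcases le_total p k with hpk | hkp
      · refine ⟨m, k - p + q, g * (ρ B φ)^[k - p] h, ?_⟩
        rw [_root_.map_mul, of_eq_conj]
        have : k = (k - p) + p := by omega
        rw [this, pow_add, pow_add]
        group
        rw [Nat.add_sub_cancel]
      · refine ⟨p - k + m, q, (ρ B φ)^[p - k] g * h, ?_⟩
        rw [_root_.map_mul, of_eq_conj]
        have : p = (p - k) + k := by omega
        rw [this, pow_add, pow_add]
        group
        rw [Nat.add_sub_cancel]

/-- The degree map killing `G` and sending `t ↦ 1`. -/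
def deg : Γ →* Multiplicative ℤ :=
  HNNExtension.lift 1 (ofAdd 1) (by intro a; simp)

@[simp] lemma deg_t : deg B φ (HNNExtension.t : Γ) = ofAdd 1 := by
  simp [deg]

@[simp] lemma deg_of (g : G) : deg B φ (HNNExtension.of g : Γ) = 1 := by
  simp [deg]

lemma conj_form (N m : ℕ) (g : G) (hmN : m ≤ N) :
    ((HNNExtension.t : Γ) ^ m)⁻¹ * HNNExtension.of g * HNNExtension.t ^ m =
      ((HNNExtension.t : Γ) ^ N)⁻¹ * HNNExtension.of ((ρ B φ)^[N - m] g) *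
        HNNExtension.t ^ N := by
  obtain ⟨j, rfl⟩ : ∃ j, N = j + m := ⟨N - m, by omega⟩
  rw [Nat.add_sub_cancel, of_eq_conj, pow_add]
  group

/-- The key law lemma: any law of `G` evaluated at the images of the free family `v`
yields a law of the HNN extension. -/
theorem hnn_eval_law {n : ℕ} (w : FreeGroup (Fin n))
    (hw : ∀ f : Fin n → G, FreeGroup.lift f w = 1) (f : Bool → Γ) :
    FreeGroup.lift f (FreeGroup.lift (v n) w) = 1 := by
  set c : Fin n → Γ := fun i => FreeGroup.lift f (v n i) with hc
  have hlift : FreeGroup.lift f (FreeGroup.lift (v n) w) = FreeGroup.lift c w := by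
    have hcc : (FreeGroup.lift f).comp (FreeGroup.lift (v n)) = FreeGroup.lift c := by
      apply FreeGroup.ext_hom; intro i; simp [hc]
    exact DFunLike.congr_fun hcc w
  have hdeg : ∀ i, deg B φ (c i) = 1 := by
    intro i
    have hci : c i = (f true)^(i:ℕ) *
        (f true * f false * (f true)⁻¹ * (f false)⁻¹) * ((f true)^(i:ℕ))⁻¹ := by
      simp [hc, v]
    rw [hci]
    simp only [_root_.map_mul, _root_.map_pow, _root_.map_inv]
    rw [mul_comm (deg B φ (f true)) (deg B φ (f false))]
    group
  choose m k g hmk using fun i => normal_form B φ (c i)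
  have hkm : ∀ i, k i = m i := by
    intro i
    have h0 := hdeg i
    rw [hmk i] at h0
    simp only [_root_.map_mul, _root_.map_inv, _root_.map_pow, deg_t, deg_of] at h0
    have h1 := congrArg toAdd h0
    simp [toAdd_pow] at h1
    omega
  set N := Finset.univ.sup m with hN
  have hle : ∀ i, m i ≤ N := fun i => Finset.le_sup (Finset.mem_univ i)
  set h : Fin n → G := fun i => (ρ B φ)^[N - m i] (g i) with hh
  have hci : ∀ i, c i = ((HNNExtension.t : Γ) ^ N)⁻¹ * HNNExtension.of (h i) *
      HNNExtension.t ^ N := by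
    intro i
    rw [hmk i, hkm i, conj_form B φ N (m i) (g i) (hle i)]
  let θN : G →* Γ := MonoidHom.mk'
    (fun x => ((HNNExtension.t : Γ) ^ N)⁻¹ * HNNExtension.of x * HNNExtension.t ^ N)
    (by intro x y; rw [_root_.map_mul]; group)
  have hfin : FreeGroup.lift c w = θN (FreeGroup.lift h w) := by
    have hθ : FreeGroup.lift c = θN.comp (FreeGroup.lift h) := by
      apply FreeGroup.ext_hom; intro i
      simp only [MonoidHom.comp_apply, FreeGroup.lift_apply_of]
      rw [hci i]; rfl
    rw [hθ]; rfl
  rw [hlift, hfin, hw h, map_one]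

end HNNLaw

/-- A semi-proper HNN extension of a finitely generated group satisfying a law
also satisfies a law; in particular, if it is not cyclic, it has finite girth. -/
theorem semiproper_hnn_of_law
    {G : Type*} [Group G] (hfg : Group.FG G) (hlaw : SatisfiesLaw G)
    (B : Subgroup G) (φ : (⊤ : Subgroup G) ≃* B) :
    SatisfiesLaw (HNNExtension G ⊤ B φ) ∧
      (¬IsCyclic (HNNExtension G ⊤ B φ) →
        ¬HasInfiniteGirth (HNNExtension G ⊤ B φ)) := by
  classical
  obtain ⟨n, w, hw1, hw2⟩ := hlaw
  -- the two-variable law word for the HNN extension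
  set W : FreeGroup Bool := FreeGroup.lift (HNNLaw.v n) w with hW
  have hWne : W ≠ 1 := by
    intro hone
    rw [hW] at hone
    refine hw1 (HNNLaw.lift_v_injective n ?_)
    rw [hone, map_one]
  have hWlaw : ∀ f : Bool → (HNNExtension G ⊤ B φ), FreeGroup.lift f W = 1 := fun f =>
    HNNLaw.hnn_eval_law B φ w hw2 f
  -- a law on `Fin 2` variables
  have hSL : SatisfiesLaw (HNNExtension G ⊤ B φ) := by
    set e : Bool → Fin 2 := fun bb => if bb then 0 else 1 with he
    set τ : Fin 2 → Bool := fun j => if j = 0 then true else false with hτ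
    have hτe : ∀ bb, τ (e bb) = bb := by decide
    refine ⟨2, FreeGroup.map e W, ?_, ?_⟩
    · intro hone
      apply hWne
      have := congrArg (FreeGroup.map τ) hone
      rwa [FreeGroup.map.comp, map_one, show τ ∘ e = id from funext hτe,
        FreeGroup.map.id] at this
    · intro f
      have hcomp : (FreeGroup.lift f).comp (FreeGroup.map e) =
          FreeGroup.lift (fun bb => f (e bb)) := by
        apply FreeGroup.ext_hom; intro bb
        simp [FreeGroup.map.of]
      have := DFunLike.congr_fun hcomp W
      simp only [MonoidHom.comp_apply] at this
      rw [this, hWlaw]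
  refine ⟨hSL, ?_⟩
  intro hnc hgirth
  obtain ⟨S, hSgen, hSrel⟩ := hgirth (W.toWord.length + 1)
  -- S must contain two distinct elements, else Γ is cyclic
  have h2 : ∃ x y : {x // x ∈ S}, x ≠ y := by
    by_contra hcon
    push_neg at hcon
    apply hnc
    rcases S.eq_empty_or_nonempty with rfl | ⟨x₀, hx₀⟩
    · refine ⟨⟨1, fun x => ?_⟩⟩
      have hbot : (⊤ : Subgroup (HNNExtension G ⊤ B φ)) = ⊥ := by
        rw [← hSgen]; simp
      have hx : x ∈ (⊥ : Subgroup (HNNExtension G ⊤ B φ)) := hbot ▸ Subgroup.mem_top x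
      rw [Subgroup.mem_bot] at hx
      rw [hx]
      exact ⟨0, by simp⟩
    · refine ⟨⟨x₀, fun x => ?_⟩⟩
      have hsub : (S : Set (HNNExtension G ⊤ B φ)) ⊆ {x₀} := by
        intro s hs
        have := hcon ⟨s, hs⟩ ⟨x₀, hx₀⟩
        simpa using congrArg Subtype.val this
      have hle : (⊤ : Subgroup (HNNExtension G ⊤ B φ)) ≤ Subgroup.zpowers x₀ := by
        rw [← hSgen]
        refine (Subgroup.closure_le _).2 ?_
        intro s hs
        have hsx : s = x₀ := hsub hs
        rw [hsx]
        exact Subgroup.mem_zpowers x₀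
      exact hle (Subgroup.mem_top x)
  obtain ⟨x, y, hxy⟩ := h2
  set σ : Bool → {x // x ∈ S} := fun bb => if bb then x else y with hσ
  set τ : {x // x ∈ S} → Bool := fun z => if z = x then true else false with hτ
  have hτσ : ∀ bb, τ (σ bb) = bb := by
    intro bb
    cases bb <;> simp [hσ, hτ, hxy.symm, Ne.symm hxy]
  set Ws : FreeGroup {x // x ∈ S} := FreeGroup.map σ W with hWs
  have hWsne : Ws ≠ 1 := by
    intro hone
    apply hWne
    have := congrArg (FreeGroup.map τ) hone
    rwa [hWs, FreeGroup.map.comp, map_one, show τ ∘ σ = id from funext hτσ,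
      FreeGroup.map.id] at this
  have hgen : ∀ w' : FreeGroup {x // x ∈ S},
      FreeGroup.lift (fun s : (HNNExtension G ⊤ B φ) => s)
        (w' >>= fun a => (pure (a : HNNExtension G ⊤ B φ) :
          FreeGroup (HNNExtension G ⊤ B φ))) =
        FreeGroup.lift (fun s : {x // x ∈ S} => (s : (HNNExtension G ⊤ B φ))) w' := by
    intro w'
    have h1 : (w' >>= fun a => (pure (a : HNNExtension G ⊤ B φ) :
        FreeGroup (HNNExtension G ⊤ B φ))) =
        FreeGroup.lift (fun a : {x // x ∈ S} => FreeGroup.of (a : (HNNExtension G ⊤ B φ))) w' := rfl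
    rw [h1]
    have hcc : (FreeGroup.lift (fun s : (HNNExtension G ⊤ B φ) => s)).comp
        (FreeGroup.lift (fun a : {x // x ∈ S} => FreeGroup.of (a : (HNNExtension G ⊤ B φ)))) =
        FreeGroup.lift (fun s : {x // x ∈ S} => (s : (HNNExtension G ⊤ B φ))) := by
      apply FreeGroup.ext_hom; intro a
      simp
    exact DFunLike.congr_fun hcc w'
  have hWseval : FreeGroup.lift (fun s : {x // x ∈ S} => (s : (HNNExtension G ⊤ B φ))) Ws = 1 := by
    have hcomp : (FreeGroup.lift (fun s : {x // x ∈ S} => (s : (HNNExtension G ⊤ B φ)))).comp (FreeGroup.map σ) =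
        FreeGroup.lift (fun bb => ((σ bb : {x // x ∈ S}) : (HNNExtension G ⊤ B φ))) := by
      apply FreeGroup.ext_hom; intro bb
      simp [FreeGroup.map.of]
    have hthis := DFunLike.congr_fun hcomp W
    simp only [MonoidHom.comp_apply] at hthis
    rw [hWs, hthis, hWlaw]
  have hlen : Ws.toWord.length ≤ W.toWord.length := by
    have hmk : Ws = FreeGroup.mk (W.toWord.map fun p => (σ p.1, p.2)) := by
      conv_lhs => rw [hWs, ← FreeGroup.mk_toWord (x := W)]
      exact FreeGroup.map.mk
    have : Ws.toWord.length = FreeGroup.norm Ws := rfl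
    rw [this, hmk]
    calc FreeGroup.norm (FreeGroup.mk (W.toWord.map fun p => (σ p.1, p.2)))
        ≤ (W.toWord.map fun p => (σ p.1, p.2)).length := FreeGroup.norm_mk_le
    _ = W.toWord.length := List.length_map _
  have hfin := hSrel Ws hWsne
  have hcontr := hfin ((hgen Ws).trans hWseval)
  omega
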